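/- Sub-Gaussian tail bound on the Jensen bias. Let Z be an integrable real random variable with mean m = E[Z], and suppose there exist constants C > 0 and C′ > 0 such that P[Z − m ≥ t] ≤ (C′ / (√(2π) C)) · exp(−t²/(2C²)) for every t ≥ 0. Then E[exp(Z)] is finite and log E[exp(Z)] − m ≤ C²/2 + log(1 + C′). -/

import Mathlib

open MeasureTheory Real Set

/-- **Sub-Gaussian tail bound on the Jensen bias.**  If `Z` is integrable with mean
`m = E[Z]` and `P[Z − m ≥ t] ≤ (C'/(√(2π) C)) exp(−t²/(2C²))` for all `t ≥ 0`, then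
`E[exp Z]` is finite and `log E[exp Z] − m ≤ C²/2 + log(1 + C')`. -/
theorem jensen_bias_subgaussian {Ω : Type*} [MeasurableSpace Ω]
    (P : Measure Ω) [IsProbabilityMeasure P]
    (Z : Ω → ℝ) (hZ : Integrable Z P)
    (C C' : ℝ) (hC : 0 < C) (hC' : 0 < C')
    (htail : ∀ t : ℝ, 0 ≤ t →
      P {ω | t ≤ Z ω - ∫ x, Z x ∂P} ≤
        ENNReal.ofReal (C' / (Real.sqrt (2 * π) * C) * Real.exp (-t ^ 2 / (2 * C ^ 2)))) :
    Integrable (fun ω => Real.exp (Z ω)) P ∧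
      Real.log (∫ ω, Real.exp (Z ω) ∂P) - ∫ x, Z x ∂P ≤ C ^ 2 / 2 + Real.log (1 + C') := by
  set m := ∫ x, Z x ∂P with hm
  set K := C' / (Real.sqrt (2 * π) * C) with hK
  have hsqrt : 0 < Real.sqrt (2 * π) := Real.sqrt_pos.2 (by positivity)
  have hKpos : 0 < K := by positivity
  have hX : AEMeasurable (fun ω => Z ω - m) P :=
    hZ.aemeasurable.sub aemeasurable_const
  have f_mble : AEMeasurable (fun ω => max (Z ω - m) 0) P :=
    hX.max aemeasurable_const
  -- layer cake formula with G(t) = exp t - 1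
  have layer :
      ∫⁻ ω, ENNReal.ofReal (∫ t in (0:ℝ)..(max (Z ω - m) 0), Real.exp t) ∂P =
        ∫⁻ t in Ioi (0:ℝ), P {a | t ≤ max (Z a - m) 0} * ENNReal.ofReal (Real.exp t) :=
    lintegral_comp_eq_lintegral_meas_le_mul P
      (ae_of_all _ fun ω => le_max_right _ _) f_mble
      (fun t _ => intervalIntegral.intervalIntegrable_exp)
      (ae_of_all _ fun t => (Real.exp_pos t).le)
  -- bound the right-hand side of the layer cake formula
  have hRHS :
      ∫⁻ t in Ioi (0:ℝ), P {a | t ≤ max (Z a - m) 0} * ENNReal.ofReal (Real.exp t) ≤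
        ENNReal.ofReal (C' * Real.exp (C ^ 2 / 2)) := by
    have step1 :
        ∫⁻ t in Ioi (0:ℝ), P {a | t ≤ max (Z a - m) 0} * ENNReal.ofReal (Real.exp t) ≤
          ∫⁻ t in Ioi (0:ℝ),
            ENNReal.ofReal (K * Real.exp (C ^ 2 / 2) *
              Real.exp (-(1 / (2 * C ^ 2)) * (t - C ^ 2) ^ 2)) := by
      refine setLIntegral_mono_ae (by fun_prop) (ae_of_all _ fun t ht => ?_)
      simp only [mem_Ioi] at ht
      have hset : {a | t ≤ max (Z a - m) 0} = {a | t ≤ Z a - m} := by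
        ext a; simp only [mem_setOf_eq, le_max_iff]
        refine ⟨fun h => ?_, Or.inl⟩
        rcases h with h | h
        · exact h
        · linarith
      rw [hset]
      calc P {a | t ≤ Z a - m} * ENNReal.ofReal (Real.exp t)
          ≤ ENNReal.ofReal (K * Real.exp (-t ^ 2 / (2 * C ^ 2))) *
              ENNReal.ofReal (Real.exp t) := by
            exact mul_le_mul_left (htail t ht.le) _
        _ = ENNReal.ofReal (K * Real.exp (-t ^ 2 / (2 * C ^ 2)) * Real.exp t) := by
            rw [← ENNReal.ofReal_mul (by positivity)]
        _ = ENNReal.ofReal (K * Real.exp (C ^ 2 / 2) *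
              Real.exp (-(1 / (2 * C ^ 2)) * (t - C ^ 2) ^ 2)) := by
            rw [mul_assoc, mul_assoc, ← Real.exp_add, ← Real.exp_add]
            congr 2
            field_simp
            ring
    have hb : (0:ℝ) < 1 / (2 * C ^ 2) := by positivity
    have hint : Integrable (fun t : ℝ => Real.exp (-(1 / (2 * C ^ 2)) * (t - C ^ 2) ^ 2)) :=
      (integrable_exp_neg_mul_sq hb).comp_sub_right (C ^ 2)
    have step2 :
        ∫⁻ t in Ioi (0:ℝ),
            ENNReal.ofReal (K * Real.exp (C ^ 2 / 2) *
              Real.exp (-(1 / (2 * C ^ 2)) * (t - C ^ 2) ^ 2)) ≤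
          ENNReal.ofReal (K * Real.exp (C ^ 2 / 2)) *
            ∫⁻ t : ℝ, ENNReal.ofReal (Real.exp (-(1 / (2 * C ^ 2)) * (t - C ^ 2) ^ 2)) := by
      rw [← lintegral_const_mul' _ _ ENNReal.ofReal_ne_top]
      calc ∫⁻ t in Ioi (0:ℝ), ENNReal.ofReal (K * Real.exp (C ^ 2 / 2) *
              Real.exp (-(1 / (2 * C ^ 2)) * (t - C ^ 2) ^ 2))
          ≤ ∫⁻ t : ℝ, ENNReal.ofReal (K * Real.exp (C ^ 2 / 2) *
              Real.exp (-(1 / (2 * C ^ 2)) * (t - C ^ 2) ^ 2)) :=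
            setLIntegral_le_lintegral _ _
        _ = ∫⁻ t : ℝ, ENNReal.ofReal (K * Real.exp (C ^ 2 / 2)) *
              ENNReal.ofReal (Real.exp (-(1 / (2 * C ^ 2)) * (t - C ^ 2) ^ 2)) := by
            congr 1; ext t; rw [← ENNReal.ofReal_mul (by positivity)]
    have hgauss :
        ∫⁻ t : ℝ, ENNReal.ofReal (Real.exp (-(1 / (2 * C ^ 2)) * (t - C ^ 2) ^ 2)) =
          ENNReal.ofReal (Real.sqrt (2 * π) * C) := by
      rw [← ofReal_integral_eq_lintegral_ofReal hint
        (ae_of_all _ fun t => (Real.exp_pos _).le)]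
      congr 1
      rw [integral_sub_right_eq_self (fun a => Real.exp (-(1 / (2 * C ^ 2)) * a ^ 2)) (C ^ 2),
        integral_gaussian]
      rw [show π / (1 / (2 * C ^ 2)) = 2 * π * C ^ 2 by field_simp,
        show (2 : ℝ) * π * C ^ 2 = (2 * π) * C ^ 2 by ring,
        Real.sqrt_mul (by positivity), Real.sqrt_sq hC.le]
    calc ∫⁻ t in Ioi (0:ℝ), P {a | t ≤ max (Z a - m) 0} * ENNReal.ofReal (Real.exp t)
        ≤ ENNReal.ofReal (K * Real.exp (C ^ 2 / 2)) *
            ENNReal.ofReal (Real.sqrt (2 * π) * C) := by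
          rw [← hgauss]; exact step1.trans step2
      _ = ENNReal.ofReal (C' * Real.exp (C ^ 2 / 2)) := by
          rw [← ENNReal.ofReal_mul (by positivity)]
          congr 1
          rw [hK]
          field_simp
  -- the key lintegral bound
  have key : ∫⁻ ω, ENNReal.ofReal (Real.exp (Z ω - m)) ∂P ≤
      ENNReal.ofReal ((1 + C') * Real.exp (C ^ 2 / 2)) := by
    have hptwise : ∀ ω, ENNReal.ofReal (Real.exp (Z ω - m)) ≤
        ENNReal.ofReal (∫ t in (0:ℝ)..(max (Z ω - m) 0), Real.exp t) + 1 := by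
      intro ω
      rw [integral_exp]
      have h1 : Real.exp (Z ω - m) ≤ Real.exp (max (Z ω - m) 0) :=
        Real.exp_le_exp.2 (le_max_left _ _)
      calc ENNReal.ofReal (Real.exp (Z ω - m))
          ≤ ENNReal.ofReal ((Real.exp (max (Z ω - m) 0) - Real.exp 0) + 1) := by
            apply ENNReal.ofReal_le_ofReal; rw [Real.exp_zero]; linarith
        _ = ENNReal.ofReal (Real.exp (max (Z ω - m) 0) - Real.exp 0) + ENNReal.ofReal 1 := by
            rw [ENNReal.ofReal_add _ zero_le_one]
            rw [Real.exp_zero, sub_nonneg]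
            exact Real.one_le_exp (le_max_right _ _)
        _ = ENNReal.ofReal (Real.exp (max (Z ω - m) 0) - Real.exp 0) + 1 := by
            rw [ENNReal.ofReal_one]
    calc ∫⁻ ω, ENNReal.ofReal (Real.exp (Z ω - m)) ∂P
        ≤ ∫⁻ ω, (ENNReal.ofReal (∫ t in (0:ℝ)..(max (Z ω - m) 0), Real.exp t) + 1) ∂P :=
          lintegral_mono hptwise
      _ = (∫⁻ ω, ENNReal.ofReal (∫ t in (0:ℝ)..(max (Z ω - m) 0), Real.exp t) ∂P) + 1 := by
          simp [lintegral_add_right _ measurable_const]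
      _ ≤ ENNReal.ofReal (C' * Real.exp (C ^ 2 / 2)) + 1 := by
          rw [layer]; exact add_le_add_left hRHS _
      _ ≤ ENNReal.ofReal ((1 + C') * Real.exp (C ^ 2 / 2)) := by
          rw [← ENNReal.ofReal_one, ← ENNReal.ofReal_add (by positivity) zero_le_one]
          apply ENNReal.ofReal_le_ofReal
          have : (1:ℝ) ≤ Real.exp (C ^ 2 / 2) := Real.one_le_exp (by positivity)
          nlinarith
  -- integrability
  have hXexp : Integrable (fun ω => Real.exp (Z ω - m)) P := by
    refine ⟨(Real.measurable_exp.comp_aemeasurable hX).aestronglyMeasurable, ?_⟩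
    rw [hasFiniteIntegral_iff_ofReal (ae_of_all _ fun ω => (Real.exp_pos _).le)]
    exact key.trans_lt ENNReal.ofReal_lt_top
  have hint : Integrable (fun ω => Real.exp (Z ω)) P := by
    have : (fun ω => Real.exp (Z ω)) = fun ω => Real.exp m * Real.exp (Z ω - m) := by
      ext ω; rw [← Real.exp_add]; ring_nf
    rw [this]
    exact hXexp.const_mul _
  refine ⟨hint, ?_⟩
  -- the expectation bound
  have hA_pos : 0 < ∫ ω, Real.exp (Z ω - m) ∂P := integral_exp_pos hXexp
  have hA_le : ∫ ω, Real.exp (Z ω - m) ∂P ≤ (1 + C') * Real.exp (C ^ 2 / 2) := by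
    rw [integral_eq_lintegral_of_nonneg_ae (ae_of_all _ fun ω => (Real.exp_pos _).le)
      (Real.measurable_exp.comp_aemeasurable hX).aestronglyMeasurable]
    calc (∫⁻ ω, ENNReal.ofReal (Real.exp (Z ω - m)) ∂P).toReal
        ≤ (ENNReal.ofReal ((1 + C') * Real.exp (C ^ 2 / 2))).toReal :=
          ENNReal.toReal_mono ENNReal.ofReal_ne_top key
      _ = (1 + C') * Real.exp (C ^ 2 / 2) := ENNReal.toReal_ofReal (by positivity)
  have hsplit : ∫ ω, Real.exp (Z ω) ∂P = Real.exp m * ∫ ω, Real.exp (Z ω - m) ∂P := by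
    rw [← integral_const_mul]
    congr 1; ext ω; rw [← Real.exp_add]; ring_nf
  rw [hsplit, Real.log_mul (Real.exp_ne_zero m) hA_pos.ne', Real.log_exp]
  have hlog : Real.log (∫ ω, Real.exp (Z ω - m) ∂P) ≤
      Real.log ((1 + C') * Real.exp (C ^ 2 / 2)) :=
    Real.log_le_log hA_pos hA_le
  rw [Real.log_mul (by positivity) (Real.exp_ne_zero _), Real.log_exp] at hlog
  linarith
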